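/- The canonical multiplet is a cochain complex: on A := O_Y ⊗ S, the operator D := Σ_{α=1}^{n} (multiplication by the class of λ^α in O_Y) ⊗ D_α satisfies D ∘ D = 0. -/

import Mathlib

set_option maxHeartbeats 1000000
set_option synthInstance.maxHeartbeats 400000

open scoped TensorProduct

open MvPolynomial in
lemma my_pderiv_comm {σ : Type*} {R : Type*} [CommSemiring R] (i j : σ)
    (p : MvPolynomial σ R) : pderiv i (pderiv j p) = pderiv j (pderiv i p) := by
  classical
  induction p using MvPolynomial.induction_on' with
  | add p q hp hq => simp [hp, hq]
  | monomial s a =>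
    rcases eq_or_ne i j with rfl | hij
    · rfl
    · simp [pderiv_monomial, Finsupp.sub_apply, Finsupp.single_eq_of_ne hij,
        Finsupp.single_eq_of_ne (Ne.symm hij), tsub_tsub, add_comm, mul_right_comm]

section Cliff
variable {R M : Type*} [CommRing R] [AddCommGroup M] [Module R M]
  {Q : QuadraticForm R M}
open CliffordAlgebra

lemma my_contract_anticomm (d d' : Module.Dual R M) :
    contractLeft (Q := Q) d ∘ₗ contractLeft (Q := Q) d'
      + contractLeft (Q := Q) d' ∘ₗ contractLeft (Q := Q) d = 0 := by
  ext x
  simp [contractLeft_comm d d' x]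

lemma my_contract_mul_anticomm (d : Module.Dual R M) (v : M) :
    contractLeft (Q := Q) d ∘ₗ LinearMap.mulLeft R (ι Q v)
      + LinearMap.mulLeft R (ι Q v) ∘ₗ contractLeft (Q := Q) d
      = d v • LinearMap.id := by
  ext x
  simp [contractLeft_ι_mul]

lemma my_contract_mul_anticomm' (d : Module.Dual R M) (v : M) :
    contractLeft (Q := (0 : QuadraticForm R M)) d ∘ₗ LinearMap.mulLeft R (ExteriorAlgebra.ι R v)
      + LinearMap.mulLeft R (ExteriorAlgebra.ι R v)
          ∘ₗ contractLeft (Q := (0 : QuadraticForm R M)) d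
      = d v • LinearMap.id :=
  my_contract_mul_anticomm d v

end Cliff

lemma my_iota_mul_anticomm {R M : Type*} [CommRing R] [AddCommGroup M] [Module R M]
    (v w : M) :
    LinearMap.mulLeft R (ExteriorAlgebra.ι R v) ∘ₗ LinearMap.mulLeft R (ExteriorAlgebra.ι R w)
      + LinearMap.mulLeft R (ExteriorAlgebra.ι R w) ∘ₗ LinearMap.mulLeft R (ExteriorAlgebra.ι R v)
      = 0 := by
  refine LinearMap.ext fun x => ?_
  simp only [LinearMap.add_apply, LinearMap.comp_apply, LinearMap.mulLeft_apply,
    LinearMap.zero_apply]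
  rw [← mul_assoc, ← mul_assoc, ← add_mul, ExteriorAlgebra.ι_add_mul_swap, zero_mul]

lemma my_anticomm_expand {A : Type*} [Ring A] [Algebra ℂ A] {m n : ℕ}
    (Γ : Fin m → Fin n → Fin n → ℂ) (hΓ : ∀ μ α β, Γ μ α β = Γ μ β α)
    (cc : Fin n → A) (ww : Fin n → Fin m → A) (dd : Fin m → A)
    (h1 : ∀ α β, cc α * cc β + cc β * cc α = 0)
    (h2 : ∀ α γ μ, cc α * ww γ μ + ww γ μ * cc α = (if α = γ then (1:ℂ) else 0) • dd μ)
    (h3 : ∀ γ μ δ ν, ww γ μ * ww δ ν + ww δ ν * ww γ μ = 0)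
    (α β : Fin n) :
    (cc α - ∑ γ, ∑ μ, Γ μ α γ • ww γ μ) * (cc β - ∑ γ, ∑ μ, Γ μ β γ • ww γ μ)
      + (cc β - ∑ γ, ∑ μ, Γ μ β γ • ww γ μ) * (cc α - ∑ γ, ∑ μ, Γ μ α γ • ww γ μ)
      = ∑ μ, (-2 * Γ μ α β) • dd μ := by
  have e1 : ∀ (x y : Fin n),
      cc x * (∑ γ, ∑ μ, Γ μ y γ • ww γ μ) + (∑ γ, ∑ μ, Γ μ y γ • ww γ μ) * cc x
        = ∑ μ, Γ μ y x • dd μ := by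
    intro x y
    rw [Finset.mul_sum, Finset.sum_mul, ← Finset.sum_add_distrib]
    have : ∀ γ : Fin n,
        cc x * (∑ μ, Γ μ y γ • ww γ μ) + (∑ μ, Γ μ y γ • ww γ μ) * cc x
          = ∑ μ, (if x = γ then (1:ℂ) else 0) • (Γ μ y γ • dd μ) := by
      intro γ
      rw [Finset.mul_sum, Finset.sum_mul, ← Finset.sum_add_distrib]
      refine Finset.sum_congr rfl fun μ _ => ?_
      rw [mul_smul_comm, smul_mul_assoc, ← smul_add, h2 x γ μ, smul_comm]
    rw [Finset.sum_congr rfl fun γ _ => this γ, Finset.sum_comm]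
    refine Finset.sum_congr rfl fun μ _ => ?_
    simp [Finset.sum_ite_eq]
  have h3' : ∀ γ μ δ ν, ww γ μ * ww δ ν = -(ww δ ν * ww γ μ) := fun γ μ δ ν =>
    eq_neg_of_add_eq_zero_left (h3 γ μ δ ν)
  have hs : ∀ γ μ, ww γ μ * (∑ δ, ∑ ν, Γ ν β δ • ww δ ν)
      = -((∑ δ, ∑ ν, Γ ν β δ • ww δ ν) * ww γ μ) := by
    intro γ μ
    rw [Finset.mul_sum, Finset.sum_mul, ← Finset.sum_neg_distrib]
    refine Finset.sum_congr rfl fun δ _ => ?_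
    rw [Finset.mul_sum, Finset.sum_mul, ← Finset.sum_neg_distrib]
    refine Finset.sum_congr rfl fun ν _ => ?_
    rw [mul_smul_comm, smul_mul_assoc, h3', smul_neg]
  have e2 : (∑ γ, ∑ μ, Γ μ α γ • ww γ μ) * (∑ δ, ∑ ν, Γ ν β δ • ww δ ν)
      + (∑ δ, ∑ ν, Γ ν β δ • ww δ ν) * (∑ γ, ∑ μ, Γ μ α γ • ww γ μ) = 0 := by
    have l : (∑ γ, ∑ μ, Γ μ α γ • ww γ μ) * (∑ δ, ∑ ν, Γ ν β δ • ww δ ν)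
        = -((∑ δ, ∑ ν, Γ ν β δ • ww δ ν) * (∑ γ, ∑ μ, Γ μ α γ • ww γ μ)) := by
      rw [Finset.sum_mul, Finset.mul_sum, ← Finset.sum_neg_distrib]
      refine Finset.sum_congr rfl fun γ _ => ?_
      rw [Finset.sum_mul, Finset.mul_sum, ← Finset.sum_neg_distrib]
      refine Finset.sum_congr rfl fun μ _ => ?_
      rw [smul_mul_assoc, mul_smul_comm, hs, smul_neg]
    rw [l, neg_add_cancel]
  have expand : (cc α - ∑ γ, ∑ μ, Γ μ α γ • ww γ μ) * (cc β - ∑ γ, ∑ μ, Γ μ β γ • ww γ μ)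
      + (cc β - ∑ γ, ∑ μ, Γ μ β γ • ww γ μ) * (cc α - ∑ γ, ∑ μ, Γ μ α γ • ww γ μ)
      = (cc α * cc β + cc β * cc α)
        - ((cc α * (∑ γ, ∑ μ, Γ μ β γ • ww γ μ) + (∑ γ, ∑ μ, Γ μ β γ • ww γ μ) * cc α)
          + (cc β * (∑ γ, ∑ μ, Γ μ α γ • ww γ μ) + (∑ γ, ∑ μ, Γ μ α γ • ww γ μ) * cc β))
        + ((∑ γ, ∑ μ, Γ μ α γ • ww γ μ) * (∑ δ, ∑ ν, Γ ν β δ • ww δ ν)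
          + (∑ δ, ∑ ν, Γ ν β δ • ww δ ν) * (∑ γ, ∑ μ, Γ μ α γ • ww γ μ)) := by
    noncomm_ring
  rw [expand, h1, e1 α β, e1 β α, e2, add_zero, zero_sub, ← Finset.sum_add_distrib,
    ← Finset.sum_neg_distrib]
  refine Finset.sum_congr rfl fun μ _ => ?_
  rw [hΓ μ β α, ← add_smul, ← neg_smul]
  ring_nf

/-- The canonical multiplet is a cochain complex: on A := O_Y ⊗ S, the operator
D := Σ_α (multiplication by the class of λ^α in O_Y) ⊗ D_α squares to zero. -/
theorem canonical_multiplet_differential_squares_to_zero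
    {m n : ℕ} (hm : 0 < m) (hn : 0 < n)
    (Γ : Fin m → Fin n → Fin n → ℂ)
    (hΓ : ∀ μ α β, Γ μ α β = Γ μ β α) :
    let P := MvPolynomial (Fin m) ℂ
    let Ext := ExteriorAlgebra ℂ (Fin n → ℂ)
    -- ∂/∂x^μ acting on the polynomial factor
    let Dx : Fin m → (P ⊗[ℂ] Ext →ₗ[ℂ] P ⊗[ℂ] Ext) := fun μ =>
      LinearMap.rTensor Ext (MvPolynomial.pderiv μ).toLinearMap
    -- left exterior multiplication by θ^β on the exterior factor
    let θmul : Fin n → (P ⊗[ℂ] Ext →ₗ[ℂ] P ⊗[ℂ] Ext) := fun β =>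
      LinearMap.lTensor P (LinearMap.mulLeft ℂ (ExteriorAlgebra.ι ℂ (Pi.single β 1)))
    -- contraction ∂/∂θ^α with the dual basis vector on the exterior factor
    let θder : Fin n → (P ⊗[ℂ] Ext →ₗ[ℂ] P ⊗[ℂ] Ext) := fun α =>
      LinearMap.lTensor P
        (CliffordAlgebra.contractLeft (Q := (0 : QuadraticForm ℂ (Fin n → ℂ)))
          (LinearMap.proj α))
    -- the pure spinor supercharges D_α
    let D : Fin n → (P ⊗[ℂ] Ext →ₗ[ℂ] P ⊗[ℂ] Ext) := fun α =>
      θder α - ∑ β, ∑ μ, Γ μ α β • (θmul β ∘ₗ Dx μ)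
    -- the ring of functions on the Maurer–Cartan variety
    let I : Ideal (MvPolynomial (Fin n) ℂ) := Ideal.span
      (Set.range fun μ : Fin m =>
        ∑ α, ∑ β, MvPolynomial.C (Γ μ α β) * MvPolynomial.X α * MvPolynomial.X β)
    let OY := MvPolynomial (Fin n) ℂ ⧸ I
    let Dtot : OY ⊗[ℂ] (P ⊗[ℂ] Ext) →ₗ[ℂ] OY ⊗[ℂ] (P ⊗[ℂ] Ext) :=
      ∑ α, TensorProduct.map
        (LinearMap.mulLeft ℂ (Ideal.Quotient.mk I (MvPolynomial.X α))) (D α)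
    Dtot ∘ₗ Dtot = 0 := by
  intro P Ext Dx θmul θder D I OY Dtot
  -- basic commutation of the two tensor factors
  have hswap : ∀ (f : P →ₗ[ℂ] P) (g : Ext →ₗ[ℂ] Ext),
      LinearMap.rTensor Ext f ∘ₗ LinearMap.lTensor P g
        = LinearMap.lTensor P g ∘ₗ LinearMap.rTensor Ext f := by
    intro f g
    rw [LinearMap.rTensor_comp_lTensor, LinearMap.lTensor_comp_rTensor]
  -- the three anticommutation relations
  have hCC : ∀ α β : Fin n, θder α ∘ₗ θder β + θder β ∘ₗ θder α = 0 := by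
    intro α β
    show LinearMap.lTensor P _ ∘ₗ LinearMap.lTensor P _
        + LinearMap.lTensor P _ ∘ₗ LinearMap.lTensor P _ = 0
    rw [← LinearMap.lTensor_comp, ← LinearMap.lTensor_comp, ← LinearMap.lTensor_add,
      my_contract_anticomm, LinearMap.lTensor_zero]
  have hCW : ∀ α β : Fin n, ∀ μ : Fin m,
      θder α ∘ₗ (θmul β ∘ₗ Dx μ) + (θmul β ∘ₗ Dx μ) ∘ₗ θder α
        = (if α = β then (1:ℂ) else 0) • Dx μ := by
    intro α β μ
    have h1 : (θmul β ∘ₗ Dx μ) ∘ₗ θder α = (θmul β ∘ₗ θder α) ∘ₗ Dx μ := by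
      rw [LinearMap.comp_assoc, hswap, ← LinearMap.comp_assoc]
    rw [h1, ← LinearMap.comp_assoc, ← LinearMap.add_comp]
    have h2 : θder α ∘ₗ θmul β + θmul β ∘ₗ θder α
        = (if α = β then (1:ℂ) else 0) • LinearMap.id (M := P ⊗[ℂ] Ext) := by
      show LinearMap.lTensor P _ ∘ₗ LinearMap.lTensor P _
          + LinearMap.lTensor P _ ∘ₗ LinearMap.lTensor P _ = _
      rw [← LinearMap.lTensor_comp, ← LinearMap.lTensor_comp, ← LinearMap.lTensor_add,
        my_contract_mul_anticomm' (R := ℂ) (M := Fin n → ℂ) (LinearMap.proj α) (Pi.single β 1),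
        LinearMap.lTensor_smul, LinearMap.lTensor_id]
      congr 1
      exact Pi.single_apply β (1:ℂ) α
    rw [h2, LinearMap.smul_comp, LinearMap.id_comp]
  have hWW : ∀ β γ : Fin n, ∀ μ ν : Fin m,
      (θmul β ∘ₗ Dx μ) ∘ₗ (θmul γ ∘ₗ Dx ν) + (θmul γ ∘ₗ Dx ν) ∘ₗ (θmul β ∘ₗ Dx μ) = 0 := by
    have key : ∀ b g : Fin n, ∀ u v : Fin m,
        (θmul b ∘ₗ Dx u) ∘ₗ (θmul g ∘ₗ Dx v)
          = (θmul b ∘ₗ θmul g) ∘ₗ LinearMap.rTensor Ext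
              (((MvPolynomial.pderiv u).toLinearMap ∘ₗ (MvPolynomial.pderiv v).toLinearMap :
                P →ₗ[ℂ] P)) := by
      intro b g u v
      rw [LinearMap.rTensor_comp, LinearMap.comp_assoc, LinearMap.comp_assoc]
      congr 1
      rw [← LinearMap.comp_assoc, hswap, LinearMap.comp_assoc]
    intro β γ μ ν
    rw [key, key]
    have hp : LinearMap.rTensor Ext
        (((MvPolynomial.pderiv ν).toLinearMap ∘ₗ (MvPolynomial.pderiv μ).toLinearMap : P →ₗ[ℂ] P))
        = LinearMap.rTensor Ext
        (((MvPolynomial.pderiv μ).toLinearMap ∘ₗ (MvPolynomial.pderiv ν).toLinearMap : P →ₗ[ℂ] P)) := by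
      exact congrArg (LinearMap.rTensor Ext) (LinearMap.ext fun p => my_pderiv_comm ν μ p)
    rw [hp, ← LinearMap.add_comp]
    have hth : θmul β ∘ₗ θmul γ + θmul γ ∘ₗ θmul β = 0 := by
      show LinearMap.lTensor P _ ∘ₗ LinearMap.lTensor P _
          + LinearMap.lTensor P _ ∘ₗ LinearMap.lTensor P _ = 0
      rw [← LinearMap.lTensor_comp, ← LinearMap.lTensor_comp, ← LinearMap.lTensor_add,
        my_iota_mul_anticomm, LinearMap.lTensor_zero]
    rw [hth, LinearMap.zero_comp]
  -- the anticommutator of the supercharges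
  have hD : ∀ α β : Fin n, D α ∘ₗ D β + D β ∘ₗ D α = ∑ μ, (-2 * Γ μ α β) • Dx μ := by
    intro α β
    exact my_anticomm_expand (A := Module.End ℂ (P ⊗[ℂ] Ext)) Γ hΓ θder
      (fun γ μ => θmul γ ∘ₗ Dx μ) Dx hCC (fun a g u => hCW a g u) (fun g u d v => hWW g d u v) α β
  -- expanding the square of the total differential
  have hdd : Dtot = ∑ α, TensorProduct.map
      (LinearMap.mulLeft ℂ (Ideal.Quotient.mk I (MvPolynomial.X α))) (D α) := rfl
  have hcomp : ∀ (a b : OY) (f g : P ⊗[ℂ] Ext →ₗ[ℂ] P ⊗[ℂ] Ext),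
      TensorProduct.map (LinearMap.mulLeft ℂ a) f ∘ₗ TensorProduct.map (LinearMap.mulLeft ℂ b) g
        = TensorProduct.map (LinearMap.mulLeft ℂ (a * b)) (f ∘ₗ g) := by
    intro a b f g
    rw [LinearMap.mulLeft_mul, TensorProduct.map_comp]
  have hDD : Dtot ∘ₗ Dtot = ∑ α, ∑ β, TensorProduct.map
      (LinearMap.mulLeft ℂ (Ideal.Quotient.mk I (MvPolynomial.X α * MvPolynomial.X β)))
      (D α ∘ₗ D β) := by
    rw [hdd, ← Module.End.mul_eq_comp, Finset.sum_mul_sum]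
    refine Finset.sum_congr rfl fun α _ => Finset.sum_congr rfl fun β _ => ?_
    rw [Module.End.mul_eq_comp, hcomp, ← map_mul]
  have hDD' : Dtot ∘ₗ Dtot = ∑ α, ∑ β, TensorProduct.map
      (LinearMap.mulLeft ℂ (Ideal.Quotient.mk I (MvPolynomial.X α * MvPolynomial.X β)))
      (D β ∘ₗ D α) := by
    rw [hDD, Finset.sum_comm]
    exact Finset.sum_congr rfl fun α _ => Finset.sum_congr rfl fun β _ => by
      rw [mul_comm (MvPolynomial.X β) (MvPolynomial.X α)]
  -- map with a sum in the second argument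
  have hms : ∀ (f : OY →ₗ[ℂ] OY) (g : Fin m → (P ⊗[ℂ] Ext →ₗ[ℂ] P ⊗[ℂ] Ext)),
      TensorProduct.map f (∑ μ, g μ) = ∑ μ, TensorProduct.map f (g μ) := by
    intro f g
    simp only [← TensorProduct.mapBilinear_apply, map_sum]
  -- the quadric relations in the quotient ring
  have hquad : ∀ μ : Fin m, (∑ α, ∑ β, (-2 * Γ μ α β) •
      (Ideal.Quotient.mk I (MvPolynomial.X α * MvPolynomial.X β))) = (0 : OY) := by
    intro μ
    have hmem : Ideal.Quotient.mk I (∑ α, ∑ β,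
        MvPolynomial.C (Γ μ α β) * MvPolynomial.X α * MvPolynomial.X β) = 0 :=
      Ideal.Quotient.eq_zero_iff_mem.mpr (Ideal.subset_span ⟨μ, rfl⟩)
    have hmkL : ∀ p : MvPolynomial (Fin n) ℂ,
        (Ideal.Quotient.mkₐ ℂ I).toLinearMap p = Ideal.Quotient.mk I p := fun _ => rfl
    have step : (∑ α, ∑ β, (-2 * Γ μ α β) •
        (Ideal.Quotient.mk I (MvPolynomial.X α * MvPolynomial.X β)))
        = (-2 : ℂ) • (Ideal.Quotient.mkₐ ℂ I).toLinearMap (∑ α, ∑ β,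
            MvPolynomial.C (Γ μ α β) * MvPolynomial.X α * MvPolynomial.X β) := by
      rw [map_sum, Finset.smul_sum]
      refine Finset.sum_congr rfl fun α _ => ?_
      rw [map_sum, Finset.smul_sum]
      refine Finset.sum_congr rfl fun β _ => ?_
      rw [mul_assoc, ← MvPolynomial.smul_eq_C_mul, map_smul, hmkL, smul_smul]
    rw [step, hmkL, hmem, smul_zero]
  -- the operator sending a to (mulLeft a) ⊗ Dx μ, linearly in a
  let Φ : Fin m → (OY →ₗ[ℂ] (OY ⊗[ℂ] (P ⊗[ℂ] Ext) →ₗ[ℂ] OY ⊗[ℂ] (P ⊗[ℂ] Ext))) := fun μ =>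
    ((TensorProduct.mapBilinear (RingHom.id ℂ) OY (P ⊗[ℂ] Ext) OY (P ⊗[ℂ] Ext)).flip (Dx μ)) ∘ₗ
      (LinearMap.mul ℂ OY)
  have hΦ : ∀ μ (a : OY), Φ μ a = TensorProduct.map (LinearMap.mulLeft ℂ a) (Dx μ) :=
    fun _ _ => rfl
  -- assembling everything
  have main1 : Dtot ∘ₗ Dtot + Dtot ∘ₗ Dtot = ∑ α, ∑ β, ∑ μ, (-2 * Γ μ α β) •
      TensorProduct.map (LinearMap.mulLeft ℂ
        (Ideal.Quotient.mk I (MvPolynomial.X α * MvPolynomial.X β))) (Dx μ) := by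
    nth_rewrite 2 [hDD']
    rw [hDD, ← Finset.sum_add_distrib]
    refine Finset.sum_congr rfl fun α _ => ?_
    rw [← Finset.sum_add_distrib]
    refine Finset.sum_congr rfl fun β _ => ?_
    rw [← TensorProduct.map_add_right, hD, hms]
    exact Finset.sum_congr rfl fun μ _ => TensorProduct.map_smul_right _ _ _
  have main2 : Dtot ∘ₗ Dtot + Dtot ∘ₗ Dtot = 0 := by
    rw [main1]
    calc (∑ α, ∑ β, ∑ μ, (-2 * Γ μ α β) •
          TensorProduct.map (LinearMap.mulLeft ℂ
            (Ideal.Quotient.mk I (MvPolynomial.X α * MvPolynomial.X β))) (Dx μ))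
        = ∑ α, ∑ μ, ∑ β, (-2 * Γ μ α β) •
          TensorProduct.map (LinearMap.mulLeft ℂ
            (Ideal.Quotient.mk I (MvPolynomial.X α * MvPolynomial.X β))) (Dx μ) :=
          Finset.sum_congr rfl fun α _ => Finset.sum_comm
      _ = ∑ μ, ∑ α, ∑ β, (-2 * Γ μ α β) •
          TensorProduct.map (LinearMap.mulLeft ℂ
            (Ideal.Quotient.mk I (MvPolynomial.X α * MvPolynomial.X β))) (Dx μ) :=
          Finset.sum_comm
      _ = ∑ μ, Φ μ (∑ α, ∑ β, (-2 * Γ μ α β) •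
            (Ideal.Quotient.mk I (MvPolynomial.X α * MvPolynomial.X β))) := by
          refine Finset.sum_congr rfl fun μ _ => ?_
          rw [map_sum]
          refine Finset.sum_congr rfl fun α _ => ?_
          rw [map_sum]
          refine Finset.sum_congr rfl fun β _ => ?_
          rw [map_smul, hΦ]
      _ = ∑ μ, Φ μ 0 := Finset.sum_congr rfl fun μ _ => by rw [hquad μ]
      _ = 0 := by simp
  have h2 : (2 : ℂ) • (Dtot ∘ₗ Dtot) = 0 := by rw [two_smul]; exact main2
  rcases smul_eq_zero.mp h2 with h | h
  · norm_num at h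
  · exact h
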